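/- Let (X, D) be a locally compact, complete metric space, let Ω ⊆ X be an open set, let α > 1, and let d ∈ D_α(Ω). Then the metric space (Ω̄, d̄) is a geodesic space, where d̄ is the unique continuous extension of d to Ω̄ × Ω̄. -/

import Mathlib

open Filter MeasureTheory Set
open scoped ENNReal Topology

/-- Length of the curve `γ` on the interval `[a, b]`, with respect to the
(candidate) distance `d`, defined as a supremum over finite partitions. -/
noncomputable def pathLengthOn {E : Type*} (d : E → E → ℝ) (γ : ℝ → E) (a b : ℝ) : ℝ≥0∞ :=
  ⨆ (k : ℕ) (t : Fin (k + 1) → ℝ) (_ : Monotone t) (_ : t 0 = a) (_ : t (Fin.last k) = b),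
    ∑ i : Fin k, ENNReal.ofReal (d (γ (t i.succ)) (γ (t i.castSucc)))

/-- Length of the curve `γ : [0,1] → E` with respect to `d`. -/
noncomputable def pathLength {E : Type*} (d : E → E → ℝ) (γ : ℝ → E) : ℝ≥0∞ :=
  pathLengthOn d γ 0 1

/-- `d` is a distance on `E`. -/
def IsDistance {E : Type*} (d : E → E → ℝ) : Prop :=
  (∀ x y, d x y = d y x) ∧ (∀ x y z, d x z ≤ d x y + d y z) ∧ ∀ x y, d x y = 0 ↔ x = y

/-- `γ : [0,1] → E` is a Lipschitz curve with respect to `d`. -/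
def LipCurve {E : Type*} (d : E → E → ℝ) (γ : ℝ → E) : Prop :=
  ∃ K : ℝ, ∀ s ∈ Icc (0 : ℝ) 1, ∀ t ∈ Icc (0 : ℝ) 1, d (γ s) (γ t) ≤ K * |s - t|

/-- `(E, d)` is a length space: `d x y` is the infimum of lengths of Lipschitz
curves `γ : [0,1] → E` joining `x` to `y`. -/
def IsLengthDist {E : Type*} (d : E → E → ℝ) : Prop :=
  ∀ x y : E, ENNReal.ofReal (d x y) =
    ⨅ (γ : ℝ → E) (_ : LipCurve d γ) (_ : γ 0 = x) (_ : γ 1 = y), pathLength d γ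

/-- `d ∈ 𝒟_α(Ω)` : `d` is a distance on `Ω` making it a length space and satisfying
`α⁻¹ D ≤ d ≤ α D`. -/
def MemD {X : Type*} [MetricSpace X] (α : ℝ) (Ω : Set X) (d : Ω → Ω → ℝ) : Prop :=
  IsDistance d ∧ IsLengthDist d ∧
    ∀ x y : Ω, α⁻¹ * dist (x : X) (y : X) ≤ d x y ∧ d x y ≤ α * dist (x : X) (y : X)

/-- Uniform convergence `dn → d` on compact subsets of `E × E`. -/
def TendstoUnifCompactly {E : Type*} [TopologicalSpace E]
    (dn : ℕ → E → E → ℝ) (d : E → E → ℝ) : Prop :=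
  ∀ K : Set (E × E), IsCompact K → ∀ ε : ℝ, 0 < ε →
    ∃ N : ℕ, ∀ n ≥ N, ∀ p ∈ K, |dn n p.1 p.2 - d p.1 p.2| < ε

/-- `e` is a continuous extension of `d : Ω → Ω → ℝ` to the closure of `Ω`. -/
def IsContExt {X : Type*} [MetricSpace X] (Ω : Set X) (d : Ω → Ω → ℝ)
    (e : closure Ω → closure Ω → ℝ) : Prop :=
  Continuous (fun p : closure Ω × closure Ω => e p.1 p.2) ∧
    ∀ x y : Ω, e ⟨x, subset_closure x.2⟩ ⟨y, subset_closure y.2⟩ = d x y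

/-- `(E, d)` is a geodesic space: any two points are joined by a constant-speed curve
`γ : [0,1] → E` whose length on each subinterval `[t,s]` equals `d (γ t) (γ s)`. -/
def IsGeodesicDist {E : Type*} (d : E → E → ℝ) : Prop :=
  ∀ x y : E, ∃ γ : ℝ → E, γ 0 = x ∧ γ 1 = y ∧
    (∀ t s : ℝ, 0 ≤ t → t ≤ s → s ≤ 1 →
      pathLengthOn d γ t s = pathLength d γ * ENNReal.ofReal (s - t)) ∧
    ∀ t s : ℝ, 0 ≤ t → t ≤ s → s ≤ 1 →
      pathLengthOn d γ t s = ENNReal.ofReal (d (γ t) (γ s))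

/-- Uniform convergence on `[0,1]` of a sequence of curves. -/
def UnifConvCurves {E : Type*} [MetricSpace E] (γn : ℕ → ℝ → E) (γ : ℝ → E) : Prop :=
  ∀ ε : ℝ, 0 < ε → ∃ N : ℕ, ∀ n ≥ N, ∀ t ∈ Icc (0 : ℝ) 1, dist (γn n t) (γ t) < ε

/-- Γ-convergence of the length functionals `L_{dn}` to `L_d` on the space of
Lipschitz curves `[0,1] → E` with the topology of uniform convergence. -/
def GammaConvLengths {E : Type*} [MetricSpace E] (dn : ℕ → E → E → ℝ) (d : E → E → ℝ) : Prop :=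
  (∀ (γn : ℕ → ℝ → E) (γ : ℝ → E),
      (∀ n, LipCurve (fun x y : E => dist x y) (γn n)) →
      LipCurve (fun x y : E => dist x y) γ → UnifConvCurves γn γ →
      pathLength d γ ≤ liminf (fun n => pathLength (dn n) (γn n)) atTop) ∧
  ∀ γ : ℝ → E, LipCurve (fun x y : E => dist x y) γ →
    ∃ γn : ℕ → ℝ → E, (∀ n, LipCurve (fun x y : E => dist x y) (γn n)) ∧
      UnifConvCurves γn γ ∧
      limsup (fun n => pathLength (dn n) (γn n)) atTop ≤ pathLength d γ

namespace Stmt3Aux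

/-- A partition of `[a,b]`. -/
structure Partn (a b : ℝ) where
  k : ℕ
  t : Fin (k + 1) → ℝ
  mono : Monotone t
  h0 : t 0 = a
  hl : t (Fin.last k) = b

/-- The sum associated to a partition. -/
noncomputable def psum {E : Type*} (d : E → E → ℝ) (γ : ℝ → E) {a b : ℝ}
    (P : Partn a b) : ℝ≥0∞ :=
  ∑ i : Fin P.k, ENNReal.ofReal (d (γ (P.t i.succ)) (γ (P.t i.castSucc)))

theorem pathLengthOn_eq_iSup {E : Type*} (d : E → E → ℝ) (γ : ℝ → E) (a b : ℝ) :
    pathLengthOn d γ a b = ⨆ P : Partn a b, psum d γ P := by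
  apply le_antisymm
  · refine iSup_le fun k => iSup_le fun t => iSup_le fun hm => iSup_le fun h0 =>
      iSup_le fun hl => ?_
    exact le_iSup_of_le ⟨k, t, hm, h0, hl⟩ le_rfl
  · refine iSup_le fun P => ?_
    obtain ⟨k, t, hm, h0, hl⟩ := P
    rw [pathLengthOn]
    refine le_trans ?_ (le_iSup _ k)
    refine le_trans ?_ (le_iSup _ t)
    rw [iSup_pos hm, iSup_pos h0, iSup_pos hl]
    exact le_rfl

/-- The two-point partition. -/
def twoPt {a b : ℝ} (h : a ≤ b) : Partn a b where
  k := 1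
  t := fun i => if i = 0 then a else b
  mono := by
    intro i j hij
    fin_cases i <;> fin_cases j <;> simp_all
  h0 := by simp
  hl := by simp [Fin.last]

theorem psum_twoPt {E : Type*} (d : E → E → ℝ) (γ : ℝ → E) {a b : ℝ} (h : a ≤ b) :
    psum d γ (twoPt h) = ENNReal.ofReal (d (γ b) (γ a)) := by
  simp [psum, twoPt, Fin.sum_univ_one]
  exact (Fin.sum_univ_one (M := ℝ≥0∞) _).trans (by simp)

theorem single_le_pathLengthOn {E : Type*} (d : E → E → ℝ) (γ : ℝ → E) {a b : ℝ} (h : a ≤ b) :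
    ENNReal.ofReal (d (γ b) (γ a)) ≤ pathLengthOn d γ a b := by
  rw [pathLengthOn_eq_iSup]
  exact le_iSup_of_le (twoPt h) (psum_twoPt d γ h).ge

/-- Concatenation of partitions, as a function on ℕ. -/
noncomputable def concatT {a b c : ℝ} (P : Partn a b) (Q : Partn b c) : ℕ → ℝ :=
  fun n => if h : n ≤ P.k then P.t ⟨n, by omega⟩ else Q.t ⟨min (n - P.k) Q.k, by omega⟩

theorem concatT_left {a b c : ℝ} (P : Partn a b) (Q : Partn b c) {n : ℕ} (h : n ≤ P.k) :
    concatT P Q n = P.t ⟨n, by omega⟩ := dif_pos h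

theorem concatT_right {a b c : ℝ} (P : Partn a b) (Q : Partn b c) {m : ℕ} (hm : m ≤ Q.k) :
    concatT P Q (P.k + m) = Q.t ⟨m, by omega⟩ := by
  rcases Nat.eq_zero_or_pos m with rfl | hpos
  · rw [concatT]
    rw [dif_pos (by omega : P.k + 0 ≤ P.k)]
    have h1 : (⟨P.k + 0, by omega⟩ : Fin (P.k + 1)) = Fin.last P.k := by
      apply Fin.ext; simp [Fin.last]
    have h2 : (⟨0, by omega⟩ : Fin (Q.k + 1)) = 0 := rfl
    rw [h1, P.hl, h2, Q.h0]
  · rw [concatT, dif_neg (by omega)]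
    congr 1
    apply Fin.ext
    simp
    omega

theorem concatT_ge_b {a b c : ℝ} (P : Partn a b) (Q : Partn b c) {n : ℕ} (h : P.k < n) :
    b ≤ concatT P Q n := by
  rw [concatT, dif_neg (by omega)]
  have := Q.mono (Fin.zero_le (⟨min (n - P.k) Q.k, by omega⟩ : Fin (Q.k + 1)))
  rwa [Q.h0] at this

theorem concatT_mono {a b c : ℝ} (P : Partn a b) (Q : Partn b c) : Monotone (concatT P Q) := by
  apply monotone_nat_of_le_succ
  intro n
  rcases le_or_gt (n + 1) P.k with h1 | h1
  · rw [concatT_left P Q (by omega), concatT_left P Q h1]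
    exact P.mono (by simp [Fin.le_def])
  · rcases le_or_gt n P.k with h2 | h2
    · -- n ≤ P.k < n+1 so n = P.k
      have hn : n = P.k := by omega
      rw [concatT_left P Q h2]
      refine le_trans ?_ (concatT_ge_b P Q h1)
      have : (⟨n, by omega⟩ : Fin (P.k + 1)) = Fin.last P.k := by
        apply Fin.ext; simp [Fin.last, hn]
      rw [this, P.hl]
    · rw [concatT, dif_neg (by omega), concatT, dif_neg (by omega)]
      exact Q.mono (by simp [Fin.le_def]; omega)

/-- Concatenation of partitions. -/
noncomputable def Partn.concat {a b c : ℝ} (P : Partn a b) (Q : Partn b c) : Partn a c where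
  k := P.k + Q.k
  t := fun i => concatT P Q i.val
  mono := fun i j hij => concatT_mono P Q hij
  h0 := by
    have := concatT_left P Q (Nat.zero_le P.k)
    simpa [P.h0, show ((⟨0, by omega⟩ : Fin (P.k+1)) = 0) from rfl] using this
  hl := by
    have := concatT_right P Q (le_refl Q.k)
    have h2 : (⟨Q.k, by omega⟩ : Fin (Q.k + 1)) = Fin.last Q.k := rfl
    rw [h2, Q.hl] at this
    simpa [Fin.last] using this

theorem psum_concat {E : Type*} (d : E → E → ℝ) (γ : ℝ → E) {a b c : ℝ}
    (P : Partn a b) (Q : Partn b c) :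
    psum d γ (P.concat Q) = psum d γ P + psum d γ Q := by
  unfold psum Partn.concat
  rw [Fin.sum_univ_add]
  congr 1
  · refine Finset.sum_congr rfl fun i _ => ?_
    have hi := i.isLt
    show ENNReal.ofReal (d (γ (concatT P Q (i.val + 1))) (γ (concatT P Q i.val))) = _
    rw [concatT_left P Q (by omega : i.val + 1 ≤ P.k),
      concatT_left P Q (by omega : i.val ≤ P.k)]
    congr 3 <;> apply Fin.ext <;> simp
  · refine Finset.sum_congr rfl fun i _ => ?_
    have hi := i.isLt
    show ENNReal.ofReal
      (d (γ (concatT P Q (P.k + i.val + 1))) (γ (concatT P Q (P.k + i.val)))) = _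
    have harith : P.k + i.val + 1 = P.k + (i.val + 1) := by omega
    rw [harith, concatT_right P Q (by omega : i.val + 1 ≤ Q.k),
      concatT_right P Q (by omega : i.val ≤ Q.k)]
    congr 3 <;> apply Fin.ext <;> simp

theorem pathLengthOn_concat_le {E : Type*} (d : E → E → ℝ) (γ : ℝ → E) {a b c : ℝ}
    (hab : a ≤ b) (hbc : b ≤ c) :
    pathLengthOn d γ a b + pathLengthOn d γ b c ≤ pathLengthOn d γ a c := by
  rw [pathLengthOn_eq_iSup d γ a b, pathLengthOn_eq_iSup d γ b c,
    pathLengthOn_eq_iSup d γ a c]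
  haveI : Nonempty (Partn a b) := ⟨twoPt hab⟩
  haveI : Nonempty (Partn b c) := ⟨twoPt hbc⟩
  rw [ENNReal.iSup_add]
  refine iSup_le fun P => ?_
  rw [ENNReal.add_iSup]
  refine iSup_le fun Q => ?_
  rw [← psum_concat]
  exact le_iSup _ (P.concat Q)

theorem psum_of_linear {E : Type*} (d : E → E → ℝ) (γ : ℝ → E) {a b c : ℝ} (hc : 0 ≤ c)
    (hlin : ∀ u v : ℝ, a ≤ u → u ≤ v → v ≤ b → d (γ v) (γ u) = c * (v - u))
    (P : Partn a b) : psum d γ P = ENNReal.ofReal (c * (b - a)) := by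
  have hrange : ∀ i : Fin (P.k + 1), a ≤ P.t i ∧ P.t i ≤ b := fun i =>
    ⟨by have := P.mono (Fin.zero_le i); rwa [P.h0] at this,
     by have := P.mono (Fin.le_last i); rwa [P.hl] at this⟩
  have hterm : ∀ i : Fin P.k,
      ENNReal.ofReal (d (γ (P.t i.succ)) (γ (P.t i.castSucc)))
        = ENNReal.ofReal (c * (P.t i.succ - P.t i.castSucc)) := fun i => by
    rw [hlin _ _ (hrange i.castSucc).1 (P.mono (Fin.castSucc_lt_succ (i := i)).le) (hrange i.succ).2]
  have hvpf : ∀ n : ℕ, min n P.k < P.k + 1 := fun n => by omega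
  set v : ℕ → ℝ := fun n => P.t ⟨min n P.k, hvpf n⟩ with hv
  have hvs : ∀ i : Fin P.k, P.t i.succ = v (i.val + 1) := fun i => by
    have hi := i.isLt
    show P.t i.succ = P.t ⟨min (i.val + 1) P.k, hvpf _⟩
    congr 1; apply Fin.ext; simp only [Fin.val_succ]; omega
  have hvc : ∀ i : Fin P.k, P.t i.castSucc = v i.val := fun i => by
    have hi := i.isLt
    show P.t i.castSucc = P.t ⟨min i.val P.k, hvpf _⟩
    congr 1; apply Fin.ext; simp only [Fin.coe_castSucc]; omega
  unfold psum
  rw [Finset.sum_congr rfl fun i _ => hterm i]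
  rw [← ENNReal.ofReal_sum_of_nonneg (fun i _ => by
    have := P.mono (Fin.castSucc_lt_succ (i := i)).le
    nlinarith [sub_nonneg.2 this])]
  congr 1
  have : ∀ i : Fin P.k, c * (P.t i.succ - P.t i.castSucc) = c * (v (i.val+1) - v i.val) :=
    fun i => by rw [hvs i, hvc i]
  rw [Finset.sum_congr rfl fun i _ => this i]
  rw [Fin.sum_univ_eq_sum_range (fun n => c * (v (n+1) - v n)) P.k, ← Finset.mul_sum,
    Finset.sum_range_sub v P.k]
  have h1 : v P.k = b := by
    show P.t ⟨min P.k P.k, hvpf _⟩ = b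
    have : (⟨min P.k P.k, hvpf _⟩ : Fin (P.k+1)) = Fin.last P.k := by
      apply Fin.ext; simp [Fin.last]
    rw [this, P.hl]
  have h2 : v 0 = a := by
    show P.t ⟨min 0 P.k, hvpf _⟩ = a
    have : (⟨min 0 P.k, hvpf _⟩ : Fin (P.k+1)) = 0 := by apply Fin.ext; simp
    rw [this, P.h0]
  rw [h1, h2]

theorem pathLengthOn_of_linear {E : Type*} (d : E → E → ℝ) (γ : ℝ → E) {a b c : ℝ}
    (hab : a ≤ b) (hc : 0 ≤ c)
    (hlin : ∀ u v : ℝ, a ≤ u → u ≤ v → v ≤ b → d (γ v) (γ u) = c * (v - u)) :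
    pathLengthOn d γ a b = ENNReal.ofReal (c * (b - a)) := by
  rw [pathLengthOn_eq_iSup]
  apply le_antisymm
  · exact iSup_le fun P => (psum_of_linear d γ hc hlin P).le
  · exact le_iSup_of_le (twoPt hab) (psum_of_linear d γ hc hlin (twoPt hab)).ge

theorem pathLengthOn_self {E : Type*} (d : E → E → ℝ) (γ : ℝ → E) (a : ℝ)
    (hdd : ∀ z, d z z = 0) : pathLengthOn d γ a a = 0 := by
  rw [pathLengthOn_of_linear d γ le_rfl le_rfl (fun u v h1 h2 h3 => by
    have : u = v := le_antisymm h2 (h3.trans h1)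
    rw [this, hdd]; ring)]
  simp


theorem dist_nonneg' {E : Type*} {d : E → E → ℝ} (hdist : IsDistance d) (u v : E) :
    0 ≤ d u v := by
  have h0 : d u u = 0 := (hdist.2.2 u u).2 rfl
  have htri := hdist.2.1 u v u
  have hsym := hdist.1 v u
  rw [h0, hsym] at htri
  linarith

theorem exists_intermediate {E : Type*} {d : E → E → ℝ} (hdist : IsDistance d)
    (hlen : IsLengthDist d) (x y : E) {θ ε : ℝ} (hθ0 : 0 ≤ θ) (hθ1 : θ ≤ 1) (hε : 0 < ε) :
    ∃ z : E, d x z ≤ θ * d x y + ε ∧ d z y ≤ (1 - θ) * d x y + ε := by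
  have hsymm := hdist.1
  have htri := hdist.2.1
  have hzz : ∀ z : E, d z z = 0 := fun z => (hdist.2.2 z z).2 rfl
  have hnn : ∀ u v : E, 0 ≤ d u v := dist_nonneg' hdist
  -- pick a near-optimal curve
  have hlt : (⨅ (γ : ℝ → E) (_ : LipCurve d γ) (_ : γ 0 = x) (_ : γ 1 = y), pathLength d γ)
      < ENNReal.ofReal (d x y) + ENNReal.ofReal (ε / 2) := by
    rw [← hlen x y]
    exact ENNReal.lt_add_right ENNReal.ofReal_ne_top
      (by simp [ENNReal.ofReal_eq_zero]; linarith)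
  rw [iInf_lt_iff] at hlt; obtain ⟨γ, hlt⟩ := hlt
  rw [iInf_lt_iff] at hlt; obtain ⟨hLip, hlt⟩ := hlt
  rw [iInf_lt_iff] at hlt; obtain ⟨hγ0, hlt⟩ := hlt
  rw [iInf_lt_iff] at hlt; obtain ⟨hγ1, hΛ⟩ := hlt
  obtain ⟨K, hK⟩ := hLip
  set K' : ℝ := max K 1 with hK'def
  have hK'pos : 0 < K' := lt_of_lt_of_le one_pos (le_max_right _ _)
  have hK' : ∀ s ∈ Icc (0:ℝ) 1, ∀ t ∈ Icc (0:ℝ) 1, d (γ s) (γ t) ≤ K' * |s - t| :=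
    fun s hs t ht => (hK s hs t ht).trans
      (mul_le_mul_of_nonneg_right (le_max_left _ _) (abs_nonneg _))
  set Λ : ℝ≥0∞ := pathLength d γ with hΛdef
  set M : ℝ := d x y + ε / 2 with hMdef
  have hM0 : 0 ≤ M := by have := hnn x y; rw [hMdef]; linarith
  have hΛM : Λ ≤ ENNReal.ofReal M := by
    rw [hMdef, ENNReal.ofReal_add (hnn x y) (by linarith)]
    exact hΛ.le
  have hΛtop : Λ ≠ ⊤ := ne_top_of_le_ne_top ENNReal.ofReal_ne_top hΛM
  set S : Set ℝ := {u : ℝ | u ∈ Icc (0:ℝ) 1 ∧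
      pathLengthOn d γ 0 u ≤ ENNReal.ofReal θ * Λ} with hSdef
  have h0S : (0:ℝ) ∈ S := by
    constructor
    · exact ⟨le_rfl, zero_le_one⟩
    · rw [pathLengthOn_self d γ 0 hzz]; exact bot_le
  have hbdd : BddAbove S := ⟨1, fun u hu => hu.1.2⟩
  set t₀ : ℝ := sSup S with ht₀def
  have ht₀0 : 0 ≤ t₀ := le_csSup hbdd h0S
  have ht₀1 : t₀ ≤ 1 := csSup_le ⟨0, h0S⟩ fun u hu => hu.1.2
  set δ : ℝ := ε / (4 * K') with hδdef
  have hδpos : 0 < δ := by positivity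
  obtain ⟨s, hsS, hs⟩ : ∃ s ∈ S, t₀ - δ < s :=
    exists_lt_of_lt_csSup ⟨0, h0S⟩ (by linarith)
  have hmemS : ∀ u : ℝ, u ∈ S ↔ u ∈ Icc (0:ℝ) 1 ∧
      pathLengthOn d γ 0 u ≤ ENNReal.ofReal θ * Λ := fun u => Iff.rfl
  have hΛ01 : pathLengthOn d γ 0 1 ≤ Λ := le_of_eq rfl
  have hst₀ : s ≤ t₀ := le_csSup hbdd hsS
  have hsS2 := ((hmemS s).1 hsS).2
  have hs01 : s ∈ Icc (0:ℝ) 1 := ((hmemS s).1 hsS).1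
  have hs0 : (0:ℝ) ≤ s := hs01.1
  have hs1 : s ≤ 1 := hs01.2
  clear_value K' Λ M S t₀ δ
  refine ⟨γ s, ?_, ?_⟩
  · -- first estimate
    have h1 : ENNReal.ofReal (d (γ s) (γ 0)) ≤ ENNReal.ofReal (θ * M) := by
      refine le_trans (single_le_pathLengthOn d γ hs0) (le_trans hsS2 ?_)
      rw [ENNReal.ofReal_mul hθ0]
      exact mul_le_mul_right hΛM _
    rw [ENNReal.ofReal_le_ofReal_iff (mul_nonneg hθ0 hM0)] at h1
    have h2 : d x (γ s) = d (γ s) (γ 0) := by rw [hγ0]; exact hsymm _ _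
    rw [h2]
    have h3 : θ * M = θ * d x y + θ * (ε / 2) := by rw [hMdef]; ring
    have h4 : θ * (ε / 2) ≤ ε / 2 := by nlinarith
    linarith
  · -- second estimate
    rcases lt_or_ge (1:ℝ) (t₀ + δ) with hcase | hcase
    · -- s is near 1
      have hsd : d (γ s) (γ 1) ≤ K' * (1 - s) := by
        have := hK' s hs01 1 ⟨zero_le_one, le_rfl⟩
        rwa [abs_of_nonpos (by linarith [hs0, hs1]), neg_sub] at this
      have h2δ : K' * (1 - s) ≤ ε / 2 := by
        have h1s : 1 - s < 2 * δ := by linarith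
        have := mul_le_mul_of_nonneg_left h1s.le hK'pos.le
        calc K' * (1 - s) ≤ K' * (2 * δ) := this
        _ = ε / 2 := by rw [hδdef]; field_simp; ring
      have hy : d (γ s) y = d (γ s) (γ 1) := by rw [hγ1]
      rw [hy]
      have : 0 ≤ (1 - θ) * d x y := mul_nonneg (by linarith) (hnn x y)
      linarith
    · -- t' := t₀ + δ ≤ 1
      set t' : ℝ := t₀ + δ with ht'def
      clear_value t'
      have ht'01 : t' ∈ Icc (0:ℝ) 1 := ⟨by linarith, hcase⟩
      have ht'S : t' ∉ S := fun h => absurd (le_csSup hbdd h) (by linarith)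
      have hθΛ : ENNReal.ofReal θ * Λ ≤ pathLengthOn d γ 0 t' := by
        by_contra hcon
        exact ht'S ((hmemS t').2 ⟨ht'01, (not_le.mp hcon).le⟩)
      have hconcat : pathLengthOn d γ 0 t' + pathLengthOn d γ t' 1 ≤ Λ :=
        le_trans (pathLengthOn_concat_le d γ ht'01.1 ht'01.2) hΛ01
      have hfin : pathLengthOn d γ 0 t' ≠ ⊤ :=
        ne_top_of_le_ne_top hΛtop (le_trans le_self_add hconcat)
      have h1 : pathLengthOn d γ t' 1 ≤ Λ - ENNReal.ofReal θ * Λ := by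
        refine le_trans (ENNReal.le_sub_of_add_le_left hfin hconcat) ?_
        exact tsub_le_tsub_left hθΛ Λ
      have h2 : Λ - ENNReal.ofReal θ * Λ ≤ ENNReal.ofReal (1 - θ) * Λ := by
        rw [tsub_le_iff_right]
        have : ENNReal.ofReal (1 - θ) * Λ + ENNReal.ofReal θ * Λ
            = (ENNReal.ofReal (1 - θ) + ENNReal.ofReal θ) * Λ := by ring
        rw [this, ← ENNReal.ofReal_add (by linarith) hθ0]
        norm_num
      have h3 : ENNReal.ofReal (d (γ 1) (γ t')) ≤ ENNReal.ofReal ((1 - θ) * M) := by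
        refine le_trans (single_le_pathLengthOn d γ ht'01.2) (le_trans h1 (le_trans h2 ?_))
        rw [ENNReal.ofReal_mul (by linarith)]
        exact mul_le_mul_right hΛM _
      rw [ENNReal.ofReal_le_ofReal_iff (mul_nonneg (by linarith) hM0)] at h3
      have htri2 : d (γ s) (γ 1) ≤ d (γ s) (γ t') + d (γ t') (γ 1) := htri _ _ _
      have hst' : d (γ s) (γ t') ≤ K' * (t' - s) := by
        have := hK' s hs01 t' ht'01
        have hst : s ≤ t' := by linarith
        rwa [abs_of_nonpos (by linarith), neg_sub] at this
      have hts2δ : K' * (t' - s) ≤ ε / 2 := by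
        have h1s : t' - s < 2 * δ := by rw [ht'def]; linarith
        calc K' * (t' - s) ≤ K' * (2 * δ) := mul_le_mul_of_nonneg_left h1s.le hK'pos.le
        _ = ε / 2 := by rw [hδdef]; field_simp; ring
      have hsym2 : d (γ t') (γ 1) = d (γ 1) (γ t') := hsymm _ _
      have hy : d (γ s) y = d (γ s) (γ 1) := by rw [hγ1]
      rw [hy]
      have hM : (1 - θ) * M = (1 - θ) * d x y + (1 - θ) * (ε / 2) := by rw [hMdef]; ring
      have : (1 - θ) * (ε / 2) ≤ ε / 2 := by nlinarith
      linarith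

section Proper

variable {F : Type*} [MetricSpace F]

theorem exists_compact_closedBall [LocallyCompactSpace F] (z : F) :
    ∃ ρ : ℝ, 0 < ρ ∧ IsCompact (Metric.closedBall z ρ) := by
  obtain ⟨V, hVc, hVn⟩ := exists_compact_mem_nhds z
  obtain ⟨ρ, hρ, hsub⟩ := (Metric.nhds_basis_closedBall.mem_iff).1 hVn
  exact ⟨ρ, hρ, hVc.of_isClosed_subset Metric.isClosed_closedBall hsub⟩

variable {e : F → F → ℝ} {α : ℝ}

theorem proper_of_intermediate [LocallyCompactSpace F] [CompleteSpace F] (hα : 0 < α)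
    (hcont : Continuous fun p : F × F => e p.1 p.2)
    (hle : ∀ z w, dist z w ≤ α * e z w) (hge : ∀ z w, e z w ≤ α * dist z w)
    (hint : ∀ x y : F, ∀ θ ε : ℝ, 0 ≤ θ → θ ≤ 1 → 0 < ε →
      ∃ z, e x z ≤ θ * e x y + ε ∧ e z y ≤ (1 - θ) * e x y + ε)
    (x : F) (r : ℝ) : IsCompact {y | e x y ≤ r} := by
  have hnn : ∀ z w : F, 0 ≤ e z w := fun z w => by
    have h1 := hle z w; have h2 := dist_nonneg (x := z) (y := w)
    nlinarith
  have hBclosed : ∀ s : ℝ, IsClosed {y : F | e x y ≤ s} := fun s =>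
    isClosed_le (hcont.comp (continuous_const.prodMk continuous_id)) continuous_const
  set A : Set ℝ := {s : ℝ | IsCompact {y : F | e x y ≤ s}} with hAdef
  have hAdown : ∀ s ∈ A, ∀ s' : ℝ, s' ≤ s → s' ∈ A := fun s hs s' hs' =>
    hs.of_isClosed_subset (hBclosed s') (fun y hy => le_trans hy hs')
  have hA0 : ∃ s : ℝ, 0 < s ∧ s ∈ A := by
    obtain ⟨ρ, hρ, hcomp⟩ := exists_compact_closedBall x
    refine ⟨ρ / α, by positivity, ?_⟩
    refine hcomp.of_isClosed_subset (hBclosed _) (fun y hy => ?_)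
    have h1 := hle x y
    have h2 : α * e x y ≤ α * (ρ / α) := mul_le_mul_of_nonneg_left hy hα.le
    rw [mul_div_cancel₀ _ (ne_of_gt hα)] at h2
    exact Metric.mem_closedBall'.2 (le_trans h1 h2)
  obtain ⟨s₀, hs₀pos, hs₀A⟩ := hA0
  by_contra hcon
  have hbddA : BddAbove A := by
    refine ⟨r, fun s hs => ?_⟩
    by_contra hrs
    exact hcon (hAdown s hs r (le_of_not_ge hrs))
  have hAne : A.Nonempty := ⟨s₀, hs₀A⟩
  obtain ⟨R, hRdef⟩ : ∃ R : ℝ, R = sSup A := ⟨_, rfl⟩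
  have hR0 : 0 < R := by
    rw [hRdef]; exact lt_of_lt_of_le hs₀pos (le_csSup hbddA hs₀A)
  have hRmem : ∀ s : ℝ, s < R → s ∈ A := fun s hs => by
    rw [hRdef] at hs
    obtain ⟨a, haA, has⟩ := exists_lt_of_lt_csSup hAne hs
    exact hAdown a haA s has.le
  -- Step (i) : the ball of radius R is compact
  have hRA : R ∈ A := by
    rw [hAdef]
    refine TotallyBounded.isCompact_of_isClosed (Metric.totallyBounded_iff.2 ?_) (hBclosed R)
    intro ε hε
    obtain ⟨ε', hε'def⟩ : ∃ v : ℝ, v = min R (ε / (4 * α)) := ⟨_, rfl⟩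
    have hε'pos : 0 < ε' := by rw [hε'def]; exact lt_min hR0 (by positivity)
    have hε'R : ε' ≤ R := by rw [hε'def]; exact min_le_left _ _
    have hε'ε : ε' ≤ ε / (4 * α) := by rw [hε'def]; exact min_le_right _ _
    obtain ⟨r', hr'def⟩ : ∃ v : ℝ, v = R - ε' / 2 := ⟨_, rfl⟩
    have hr'A : r' ∈ A := hRmem r' (by linarith)
    obtain ⟨t, htfin, htcov⟩ := Metric.totallyBounded_iff.1 hr'A.totallyBounded (ε/2) (by positivity)
    refine ⟨t, htfin, fun y hy => ?_⟩
    have hy' : e x y ≤ R := hy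
    obtain ⟨δ, hδdef⟩ : ∃ v : ℝ, v = ε' / 4 := ⟨_, rfl⟩
    have hδpos : 0 < δ := by rw [hδdef]; positivity
    obtain ⟨θ, hθdef⟩ : ∃ v : ℝ, v = (r' - δ) / R := ⟨_, rfl⟩
    have hθ0 : 0 ≤ θ := by
      rw [hθdef]
      apply div_nonneg _ hR0.le
      rw [hr'def, hδdef]; linarith
    have hθ1 : θ ≤ 1 := by
      rw [hθdef, div_le_one hR0, hr'def, hδdef]; linarith
    obtain ⟨z', hz1, hz2⟩ := hint x y θ δ hθ0 hθ1 hδpos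
    have hθR : θ * R = r' - δ := by
      rw [hθdef, div_mul_cancel₀ _ (ne_of_gt hR0)]
    have hz1' : e x z' ≤ r' := by
      have : θ * e x y ≤ θ * R := mul_le_mul_of_nonneg_left hy' hθ0
      linarith [hθR ▸ this]
    have hz2' : e z' y ≤ ε' := by
      have h1 : (1 - θ) * e x y ≤ (1 - θ) * R :=
        mul_le_mul_of_nonneg_left hy' (by linarith)
      have h2 : (1 - θ) * R = R - (r' - δ) := by rw [sub_mul, one_mul, hθR]
      rw [h2] at h1
      linarith [hz2]
    have hdzy : dist z' y ≤ ε / 4 := by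
      have h1 := hle z' y
      have h2 : α * e z' y ≤ α * ε' := mul_le_mul_of_nonneg_left hz2' hα.le
      have h3 : α * ε' ≤ α * (ε / (4 * α)) := mul_le_mul_of_nonneg_left hε'ε hα.le
      have h4 : α * (ε / (4 * α)) = ε / 4 := by field_simp
      linarith
    obtain ⟨w, hwt, hw⟩ := mem_iUnion₂.1 (htcov hz1')
    refine mem_iUnion₂.2 ⟨w, hwt, ?_⟩
    rw [Metric.mem_ball] at hw ⊢
    have := dist_triangle y z' w
    rw [dist_comm y z'] at this
    linarith
  -- Step (ii) : we can enlarge the radius, contradiction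
  set K : Set F := {y : F | e x y ≤ R} with hKdef
  have hKcomp : IsCompact K := hRA
  have hxK : x ∈ K := by
    have h1 := hge x x
    simp only [hKdef, mem_setOf_eq]
    have : dist x x = 0 := dist_self x
    nlinarith [hnn x x]
  choose ρ hρpos hρcomp using fun z : F => exists_compact_closedBall z
  have hcovopen : ∀ z : F, IsOpen (Metric.ball z (ρ z / 2)) := fun z => Metric.isOpen_ball
  have hcov : K ⊆ ⋃ z : F, Metric.ball z (ρ z / 2) := fun z _ =>
    mem_iUnion.2 ⟨z, Metric.mem_ball_self (by linarith [hρpos z])⟩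
  obtain ⟨t, htcov⟩ := hKcomp.elim_finite_subcover _ hcovopen hcov
  have htne : t.Nonempty := by
    obtain ⟨i, hi, _⟩ := mem_iUnion₂.1 (htcov hxK)
    exact ⟨i, hi⟩
  obtain ⟨δ₁, hδ₁def⟩ : ∃ v : ℝ, v = t.inf' htne ρ := ⟨_, rfl⟩
  have hδ₁pos : 0 < δ₁ := by
    rw [hδ₁def]; exact (Finset.lt_inf'_iff htne).2 fun i _ => hρpos i
  have hδ₁le : ∀ i ∈ t, δ₁ ≤ ρ i := fun i hi => by
    rw [hδ₁def]; exact Finset.inf'_le _ hi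
  obtain ⟨δ₀, hδ₀def⟩ : ∃ v : ℝ, v = min R (δ₁ / (8 * α)) := ⟨_, rfl⟩
  have hδ₀pos : 0 < δ₀ := by rw [hδ₀def]; exact lt_min hR0 (by positivity)
  have hδ₀R : δ₀ ≤ R := by rw [hδ₀def]; exact min_le_left _ _
  have hδ₀δ₁ : δ₀ ≤ δ₁ / (8 * α) := by rw [hδ₀def]; exact min_le_right _ _
  have hbig : {y : F | e x y ≤ R + δ₀} ⊆ ⋃ i ∈ t, Metric.closedBall i (ρ i) := by
    intro y hy
    have hy' : e x y ≤ R + δ₀ := hy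
    obtain ⟨θ, hθdef⟩ : ∃ v : ℝ, v = (R - δ₀) / (R + δ₀) := ⟨_, rfl⟩
    have hRδ : 0 < R + δ₀ := by linarith
    have hθ0 : 0 ≤ θ := by rw [hθdef]; exact div_nonneg (by linarith) hRδ.le
    have hθ1 : θ ≤ 1 := by rw [hθdef, div_le_one hRδ]; linarith
    obtain ⟨z', hz1, hz2⟩ := hint x y θ δ₀ hθ0 hθ1 hδ₀pos
    have hθR : θ * (R + δ₀) = R - δ₀ := by
      rw [hθdef, div_mul_cancel₀ _ (ne_of_gt hRδ)]
    have hz1' : e x z' ≤ R := by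
      have : θ * e x y ≤ θ * (R + δ₀) := mul_le_mul_of_nonneg_left hy' hθ0
      linarith [hθR ▸ this]
    have hz2' : e z' y ≤ 3 * δ₀ := by
      have h1 : (1 - θ) * e x y ≤ (1 - θ) * (R + δ₀) :=
        mul_le_mul_of_nonneg_left hy' (by linarith)
      have h2 : (1 - θ) * (R + δ₀) = (R + δ₀) - (R - δ₀) := by
        rw [sub_mul, one_mul, hθR]
      rw [h2] at h1
      linarith
    have hdzy : dist z' y ≤ 3 * δ₁ / 8 := by
      have h1 := hle z' y
      have h2 : α * e z' y ≤ α * (3 * δ₀) := mul_le_mul_of_nonneg_left hz2' hα.le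
      have h3 : α * (3 * δ₀) ≤ α * (3 * (δ₁ / (8 * α))) :=
        mul_le_mul_of_nonneg_left (by linarith) hα.le
      have h4 : α * (3 * (δ₁ / (8 * α))) = 3 * δ₁ / 8 := by field_simp
      linarith
    obtain ⟨i, hit, hi⟩ := mem_iUnion₂.1 (htcov hz1')
    rw [Metric.mem_ball, dist_comm z' i] at hi
    refine mem_iUnion₂.2 ⟨i, hit, ?_⟩
    rw [Metric.mem_closedBall, dist_comm]
    have htr := dist_triangle i z' y
    have hδρ := hδ₁le i hit
    have hρi := hρpos i
    linarith
  have hRδA : R + δ₀ ∈ A := by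
    have hcompU : IsCompact (⋃ i ∈ t, Metric.closedBall i (ρ i)) :=
      t.finite_toSet.isCompact_biUnion (fun i _ => hρcomp i)
    exact hcompU.of_isClosed_subset (hBclosed _) hbig
  have hfin : R + δ₀ ≤ R := by
    have := le_csSup hbddA hRδA
    rwa [← hRdef] at this
  linarith

theorem exists_midpoint' [LocallyCompactSpace F] [CompleteSpace F] (hα : 0 < α)
    (hcont : Continuous fun p : F × F => e p.1 p.2)
    (hle : ∀ z w, dist z w ≤ α * e z w) (hge : ∀ z w, e z w ≤ α * dist z w)
    (hsymm : ∀ z w, e z w = e w z) (htri : ∀ a b c : F, e a c ≤ e a b + e b c)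
    (hint : ∀ x y : F, ∀ θ ε : ℝ, 0 ≤ θ → θ ≤ 1 → 0 < ε →
      ∃ z, e x z ≤ θ * e x y + ε ∧ e z y ≤ (1 - θ) * e x y + ε)
    (x y : F) : ∃ m : F, e x m = e x y / 2 ∧ e m y = e x y / 2 := by
  have hnn : ∀ z w : F, 0 ≤ e z w := fun z w => by
    have h1 := hle z w; have h2 := dist_nonneg (x := z) (y := w)
    nlinarith
  have hseq : ∀ n : ℕ, ∃ m : F, e x m ≤ (1/2) * e x y + 1/(n+1) ∧
      e m y ≤ (1 - 1/2) * e x y + 1/(n+1) := fun n =>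
    hint x y (1/2) (1/(n+1)) (by norm_num) (by norm_num) (by positivity)
  choose m hm1 hm2 using hseq
  have hmem : ∀ n, m n ∈ {z : F | e x z ≤ e x y / 2 + 1} := fun n => by
    have h1 := hm1 n
    have h2 : 1 / ((n:ℝ)+1) ≤ 1 := by
      rw [div_le_one (by positivity)]
      simp
    simp only [mem_setOf_eq]
    linarith
  obtain ⟨m₀, _, φ, hφ, hten⟩ :=
    (proper_of_intermediate hα hcont hle hge hint x (e x y / 2 + 1)).tendsto_subseq hmem
  have hc1 : Continuous fun z : F => e x z := hcont.comp (continuous_const.prodMk continuous_id)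
  have hc2 : Continuous fun z : F => e z y := hcont.comp (continuous_id.prodMk continuous_const)
  have haux : Tendsto (fun n : ℕ => e x y / 2 + 1/((n:ℝ)+1)) atTop (𝓝 (e x y / 2)) := by
    have h1 := tendsto_one_div_add_atTop_nhds_zero_nat (𝕜 := ℝ)
    simpa using (tendsto_const_nhds (x := e x y / 2) (f := (atTop : Filter ℕ))).add h1
  have hlim1 : e x m₀ ≤ e x y / 2 := by
    refine le_of_tendsto_of_tendsto' ((hc1.tendsto m₀).comp hten) haux (fun n => ?_)
    calc e x (m (φ n)) ≤ (1/2) * e x y + 1/((φ n : ℝ)+1) := hm1 (φ n)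
    _ ≤ e x y / 2 + 1/((n:ℝ)+1) := by
        have h0 : n ≤ φ n := hφ.le_apply
        have h1 : (n:ℝ) + 1 ≤ (φ n : ℝ) + 1 := by
          have : (n:ℝ) ≤ (φ n : ℝ) := Nat.cast_le.2 h0
          linarith
        have := one_div_le_one_div_of_le (by positivity : (0:ℝ) < (n:ℝ)+1) h1
        linarith
  have hlim2 : e m₀ y ≤ e x y / 2 := by
    refine le_of_tendsto_of_tendsto' ((hc2.tendsto m₀).comp hten) haux (fun n => ?_)
    calc e (m (φ n)) y ≤ (1 - 1/2) * e x y + 1/((φ n : ℝ)+1) := hm2 (φ n)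
    _ ≤ e x y / 2 + 1/((n:ℝ)+1) := by
        have h0 : n ≤ φ n := hφ.le_apply
        have h1 : (n:ℝ) + 1 ≤ (φ n : ℝ) + 1 := by
          have : (n:ℝ) ≤ (φ n : ℝ) := Nat.cast_le.2 h0
          linarith
        have := one_div_le_one_div_of_le (by positivity : (0:ℝ) < (n:ℝ)+1) h1
        linarith
  have htr := htri x m₀ y
  exact ⟨m₀, by linarith, by linarith⟩

end Proper

section Dyadic

variable {F : Type*} [MetricSpace F]

/-- Dyadic subdivision: `dy mid x y n k` is the point `γ (k / 2^n)`. -/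
noncomputable def dy (mid : F → F → F) (x y : F) : ℕ → ℕ → F
  | 0, k => if k = 0 then x else y
  | (n+1), k =>
      if k % 2 = 0 then dy mid x y n (k / 2)
      else mid (dy mid x y n (k / 2)) (dy mid x y n (k / 2 + 1))

theorem dy_succ (mid : F → F → F) (x y : F) (n k : ℕ) :
    dy mid x y (n+1) k = if k % 2 = 0 then dy mid x y n (k / 2)
      else mid (dy mid x y n (k / 2)) (dy mid x y n (k / 2 + 1)) := by
  rw [dy]

theorem dy_zero' (mid : F → F → F) (x y : F) : ∀ n, dy mid x y n 0 = x := by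
  intro n
  induction n with
  | zero => simp [dy]
  | succ n ih => rw [dy_succ]; simpa using ih

theorem dy_last (mid : F → F → F) (x y : F) : ∀ n, dy mid x y n (2^n) = y := by
  intro n
  induction n with
  | zero => simp [dy]
  | succ n ih =>
    have h1 : 2^(n+1) % 2 = 0 := by rw [pow_succ]; exact Nat.mul_mod_left _ _
    have h2 : 2^(n+1) / 2 = 2^n := by rw [pow_succ]; exact Nat.mul_div_cancel _ (by norm_num)
    rw [dy_succ, if_pos h1, h2, ih]

variable {e : F → F → ℝ}

theorem dy_adj (mid : F → F → F) (x y : F)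
    (hmid : ∀ a b : F, e a (mid a b) = e a b / 2 ∧ e (mid a b) b = e a b / 2) :
    ∀ n k, k + 1 ≤ 2^n →
      e (dy mid x y n k) (dy mid x y n (k+1)) = e x y / 2^n := by
  intro n
  induction n with
  | zero =>
    intro k hk
    have hk0 : k = 0 := by simpa using hk
    subst hk0
    simp [dy]
  | succ n ih =>
    intro k hk
    have hpow : (2:ℕ)^(n+1) = 2 * 2^n := by rw [pow_succ]; ring
    have hpowR : (2:ℝ)^(n+1) = 2^n * 2 := by rw [pow_succ]
    rcases Nat.even_or_odd k with ⟨j, hj⟩ | ⟨j, hj⟩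
    · subst hj
      have e1 : (j + j) % 2 = 0 := by omega
      have e2 : (j + j) / 2 = j := by omega
      have e3 : (j + j + 1) % 2 = 1 := by omega
      have e4 : (j + j + 1) / 2 = j := by omega
      have hj1 : j + 1 ≤ 2^n := by rw [hpow] at hk; omega
      rw [dy_succ, dy_succ, if_pos e1, if_neg (by omega), e2, e4]
      rw [(hmid (dy mid x y n j) (dy mid x y n (j+1))).1, ih j hj1, hpowR, div_div]
    · subst hj
      have e1 : (2*j + 1) % 2 = 1 := by omega
      have e2 : (2*j + 1) / 2 = j := by omega
      have e3 : (2*j + 1 + 1) % 2 = 0 := by omega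
      have e4 : (2*j + 1 + 1) / 2 = j + 1 := by omega
      have hj1 : j + 1 ≤ 2^n := by rw [hpow] at hk; omega
      rw [dy_succ, dy_succ, if_neg (by omega), if_pos e3, e2, e4]
      rw [(hmid (dy mid x y n j) (dy mid x y n (j+1))).2, ih j hj1, hpowR, div_div]

theorem dy_chain_le (mid : F → F → F) (x y : F)
    (hmid : ∀ a b : F, e a (mid a b) = e a b / 2 ∧ e (mid a b) b = e a b / 2)
    (hzz : ∀ z : F, e z z = 0) (htri : ∀ a b c : F, e a c ≤ e a b + e b c) :
    ∀ n j k, j ≤ k → k ≤ 2^n →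
      e (dy mid x y n j) (dy mid x y n k) ≤ ((k:ℝ) - (j:ℝ)) * (e x y / 2^n) := by
  intro n j k hjk
  induction k, hjk using Nat.le_induction with
  | base =>
    intro _
    rw [hzz]
    simp
  | succ k hjk ih =>
    intro hk
    have ih' := ih (by omega)
    have adj := dy_adj mid x y hmid n k (by omega)
    have htr := htri (dy mid x y n j) (dy mid x y n k) (dy mid x y n (k+1))
    push_cast
    nlinarith [htr, ih', adj]

theorem dy_chain_eq (mid : F → F → F) (x y : F)
    (hmid : ∀ a b : F, e a (mid a b) = e a b / 2 ∧ e (mid a b) b = e a b / 2)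
    (hzz : ∀ z : F, e z z = 0) (htri : ∀ a b c : F, e a c ≤ e a b + e b c) :
    ∀ n j k, j ≤ k → k ≤ 2^n →
      e (dy mid x y n j) (dy mid x y n k) = ((k:ℝ) - (j:ℝ)) * (e x y / 2^n) := by
  intro n j k hjk hk
  have hle := dy_chain_le mid x y hmid hzz htri n j k hjk hk
  have h1 : e (dy mid x y n 0) (dy mid x y n j) ≤ (j:ℝ) * (e x y / 2^n) := by
    simpa using dy_chain_le mid x y hmid hzz htri n 0 j (Nat.zero_le _) (le_trans hjk hk)
  have h2 : e (dy mid x y n k) (dy mid x y n (2^n)) ≤ (((2^n : ℕ):ℝ) - (k:ℝ)) * (e x y / 2^n) :=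
    dy_chain_le mid x y hmid hzz htri n k (2^n) hk le_rfl
  rw [dy_zero'] at h1
  rw [dy_last] at h2
  have htr1 : e x y ≤ e x (dy mid x y n j) + e (dy mid x y n j) (dy mid x y n k) +
      e (dy mid x y n k) y := by
    have ha := htri x (dy mid x y n j) y
    have hb := htri (dy mid x y n j) (dy mid x y n k) y
    linarith
  have hθ : ((2:ℝ)^n) * (e x y / 2^n) = e x y := by field_simp
  apply le_antisymm hle
  have hcast : (((2^n : ℕ)):ℝ) = (2:ℝ)^n := by push_cast; ring
  rw [hcast] at h2
  nlinarith [h1, h2, htr1, hθ]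

theorem floor_div_pow_tendsto {u : ℝ} (h0 : 0 ≤ u) :
    Tendsto (fun n : ℕ => (⌊u * 2^n⌋₊ : ℝ) / 2^n) atTop (𝓝 u) := by
  have hlow : ∀ n : ℕ, u - (1/2:ℝ)^n ≤ (⌊u * 2^n⌋₊:ℝ)/2^n := fun n => by
    have hp : (0:ℝ) < 2^n := by positivity
    have hexp : (1/2:ℝ)^n * 2^n = 1 := by rw [← mul_pow]; norm_num
    rw [le_div_iff₀ hp]
    have hlt := Nat.lt_floor_add_one (u * 2^n)
    nlinarith [hlt, hexp]
  have hup : ∀ n : ℕ, (⌊u * 2^n⌋₊:ℝ)/2^n ≤ u := fun n => by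
    have hp : (0:ℝ) < 2^n := by positivity
    rw [div_le_iff₀ hp]
    exact Nat.floor_le (by positivity)
  have hg : Tendsto (fun n : ℕ => u - (1/2:ℝ)^n) atTop (𝓝 u) := by
    have h1 := tendsto_pow_atTop_nhds_zero_of_lt_one
      (by norm_num : (0:ℝ) ≤ 1/2) (by norm_num : (1/2:ℝ) < 1)
    simpa using (tendsto_const_nhds (x := u) (f := (atTop : Filter ℕ))).sub h1
  exact tendsto_of_tendsto_of_tendsto_of_le_of_le hg tendsto_const_nhds hlow hup

theorem exists_unit_speed [CompleteSpace F] {α : ℝ} (hα : 0 < α)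
    (hcont : Continuous fun p : F × F => e p.1 p.2)
    (hle : ∀ z w : F, dist z w ≤ α * e z w)
    (hnn : ∀ z w : F, 0 ≤ e z w) (hzz : ∀ z : F, e z z = 0)
    (htri : ∀ a b c : F, e a c ≤ e a b + e b c)
    (hmid_ex : ∀ a b : F, ∃ m : F, e a m = e a b / 2 ∧ e m b = e a b / 2)
    (x y : F) :
    ∃ γ : ℝ → F, γ 0 = x ∧ γ 1 = y ∧
      ∀ t s : ℝ, 0 ≤ t → t ≤ s → s ≤ 1 → e (γ t) (γ s) = (s - t) * e x y := by
  classical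
  choose mid hmid using hmid_ex
  have hL0 : 0 ≤ e x y := hnn x y
  set c : ℝ → ℝ := fun t => max 0 (min t 1) with hcdef
  have hc0 : ∀ t, 0 ≤ c t := fun t => le_max_left _ _
  have hc1 : ∀ t, c t ≤ 1 := fun t => max_le zero_le_one (min_le_right _ _)
  have hceq : ∀ t : ℝ, 0 ≤ t → t ≤ 1 → c t = t := fun t h1 h2 => by
    rw [hcdef]; simp only [min_eq_left h2, max_eq_right h1]
  set kn : ℝ → ℕ → ℕ := fun t n => ⌊c t * 2^n⌋₊ with hkndef
  have hknle : ∀ t n, kn t n ≤ 2^n := fun t n => by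
    rw [hkndef]
    have h1 : c t * 2^n ≤ ((2^n : ℕ) : ℝ) := by
      push_cast
      nlinarith [hc1 t, hc0 t, pow_pos (by norm_num : (0:ℝ) < 2) n]
    calc ⌊c t * 2^n⌋₊ ≤ ⌊((2^n : ℕ) : ℝ)⌋₊ := Nat.floor_le_floor h1
    _ = 2^n := Nat.floor_natCast _
  set sq : ℝ → ℕ → F := fun t n => dy mid x y n (kn t n) with hsqdef
  have hdouble : ∀ n k, dy mid x y (n+1) (2*k) = dy mid x y n k := fun n k => by
    rw [dy_succ, if_pos (by omega)]
    congr 1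
    omega
  have hbracket : ∀ t : ℝ, ∀ n : ℕ, 2 * ⌊c t * 2^n⌋₊ ≤ ⌊c t * 2^(n+1)⌋₊ ∧
      ⌊c t * 2^(n+1)⌋₊ ≤ 2 * ⌊c t * 2^n⌋₊ + 1 := by
    intro t n
    have h0tn : (0:ℝ) ≤ c t * 2^n := by positivity
    have hfl := Nat.floor_le h0tn
    have hlt := Nat.lt_floor_add_one (c t * 2^n)
    constructor
    · apply Nat.le_floor
      push_cast
      rw [pow_succ]
      nlinarith
    · have hlt2 : c t * 2^(n+1) < ((2 * ⌊c t * 2^n⌋₊ + 2 : ℕ) : ℝ) := by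
        push_cast
        rw [pow_succ]
        nlinarith
      have := (Nat.floor_lt (by positivity)).2 hlt2
      omega
  have hcauchy : ∀ t : ℝ, CauchySeq (sq t) := by
    intro t
    apply cauchySeq_of_le_geometric (1/2 : ℝ) (α * e x y) (by norm_num)
    intro n
    have hbr1 : 2 * kn t n ≤ kn t (n+1) := (hbracket t n).1
    have hbr2 : kn t (n+1) ≤ 2 * kn t n + 1 := (hbracket t n).2
    have hstep : e (sq t n) (sq t (n+1)) ≤ e x y / 2^(n+1) := by
      rw [hsqdef]
      simp only
      rw [← hdouble n (kn t n)]
      have hch := dy_chain_le mid x y hmid hzz htri (n+1) (2 * kn t n) (kn t (n+1))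
        hbr1 (hknle t (n+1))
      refine le_trans hch ?_
      have hd : ((kn t (n+1) : ℝ) - ((2 * kn t n : ℕ) : ℝ)) ≤ 1 := by
        have h' : (kn t (n+1) : ℝ) ≤ ((2 * kn t n + 1 : ℕ) : ℝ) := Nat.cast_le.2 hbr2
        push_cast at h' ⊢
        linarith
      have hθ : 0 ≤ e x y / 2^(n+1) := by positivity
      nlinarith [hd, hθ, hch]
    have hdist := hle (sq t n) (sq t (n+1))
    have h2 : α * e (sq t n) (sq t (n+1)) ≤ α * (e x y / 2^(n+1)) :=
      mul_le_mul_of_nonneg_left hstep hα.le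
    have h3 : α * (e x y / 2^(n+1)) ≤ α * e x y * (1/2)^n := by
      have he : α * (e x y / 2^(n+1)) = α * e x y * (1/2:ℝ)^(n+1) := by
        rw [div_pow, one_pow]
        field_simp
      rw [he]
      have hp : (1/2:ℝ)^(n+1) ≤ (1/2:ℝ)^n :=
        pow_le_pow_of_le_one (by norm_num) (by norm_num) (by omega)
      have hαL : 0 ≤ α * e x y := mul_nonneg hα.le hL0
      nlinarith [hαL, hp]
    linarith
  have hγex : ∀ t : ℝ, ∃ z : F, Tendsto (sq t) atTop (𝓝 z) := fun t =>
    cauchySeq_tendsto_of_complete (hcauchy t)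
  choose γ hγ using hγex
  have hsq0 : ∀ n, sq 0 n = x := fun n => by
    rw [hsqdef]
    simp only
    have : kn 0 n = 0 := by
      rw [hkndef]
      simp only
      rw [hceq 0 le_rfl zero_le_one]
      simp
    rw [this, dy_zero']
  have hsq1 : ∀ n, sq 1 n = y := fun n => by
    rw [hsqdef]
    simp only
    have : kn 1 n = 2^n := by
      rw [hkndef]
      simp only
      rw [hceq 1 zero_le_one le_rfl, one_mul]
      have : (2:ℝ)^n = ((2^n : ℕ) : ℝ) := by push_cast; ring
      rw [this, Nat.floor_natCast]
    rw [this, dy_last]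
  refine ⟨γ, ?_, ?_, ?_⟩
  · exact tendsto_nhds_unique (hγ 0) (Tendsto.congr (fun n => (hsq0 n).symm) tendsto_const_nhds)
  · exact tendsto_nhds_unique (hγ 1) (Tendsto.congr (fun n => (hsq1 n).symm) tendsto_const_nhds)
  · intro t s ht hts hs1
    have hct : c t = t := hceq t ht (le_trans hts hs1)
    have hcs : c s = s := hceq s (le_trans ht hts) hs1
    have hmono : ∀ n, kn t n ≤ kn s n := fun n => by
      rw [hkndef]
      exact Nat.floor_le_floor (by
        have : c t ≤ c s := by rw [hct, hcs]; exact hts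
        nlinarith [pow_pos (by norm_num : (0:ℝ) < 2) n])
    have heq : ∀ n, e (sq t n) (sq s n) = ((kn s n : ℝ) - (kn t n : ℝ)) * (e x y / 2^n) :=
      fun n => dy_chain_eq mid x y hmid hzz htri n (kn t n) (kn s n) (hmono n) (hknle s n)
    have htend1 : Tendsto (fun n => e (sq t n) (sq s n)) atTop (𝓝 (e (γ t) (γ s))) :=
      (hcont.tendsto (γ t, γ s)).comp ((hγ t).prodMk_nhds (hγ s))
    have hfs : Tendsto (fun n : ℕ => ((kn s n : ℝ))/2^n) atTop (𝓝 s) := by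
      have := floor_div_pow_tendsto (le_trans ht hts)
      refine this.congr (fun n => ?_)
      rw [hkndef]; simp only; rw [hcs]
    have hft : Tendsto (fun n : ℕ => ((kn t n : ℝ))/2^n) atTop (𝓝 t) := by
      have := floor_div_pow_tendsto ht
      refine this.congr (fun n => ?_)
      rw [hkndef]; simp only; rw [hct]
    have htend2 : Tendsto (fun n => ((kn s n : ℝ) - (kn t n : ℝ)) * (e x y / 2^n))
        atTop (𝓝 ((s - t) * e x y)) := by
      have h1 : Tendsto (fun n : ℕ => ((kn s n : ℝ)/2^n - (kn t n : ℝ)/2^n) * e x y)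
          atTop (𝓝 ((s - t) * e x y)) := (hfs.sub hft).mul_const _
      refine h1.congr (fun n => ?_)
      have hp : ((2:ℝ)^n) ≠ 0 := by positivity
      field_simp
      try ring
    exact tendsto_nhds_unique (htend1.congr' (Eventually.of_forall fun n => (heq n))) htend2

end Dyadic

section Main

variable {X : Type*} [MetricSpace X] {Ω : Set X}

/-- Inclusion of `Ω` into its closure. -/
def incl (x : Ω) : (closure Ω : Set X) := ⟨x.1, subset_closure x.2⟩

theorem denseRange_incl : DenseRange (incl (Ω := Ω)) := by
  intro z
  have hz : (z : X) ∈ closure Ω := z.2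
  rw [mem_closure_iff_seq_limit] at hz
  obtain ⟨u, hu, hconv⟩ := hz
  rw [mem_closure_iff_seq_limit]
  refine ⟨fun n => incl ⟨u n, hu n⟩, fun n => ⟨_, rfl⟩, ?_⟩
  rw [tendsto_subtype_rng]
  exact hconv

theorem mem_of_dense_of_closed {Y : Type*} [TopologicalSpace Y] {D C : Set Y}
    (hD : Dense D) (hC : IsClosed C) (h : D ⊆ C) (y : Y) : y ∈ C :=
  hC.closure_eq ▸ closure_mono h (hD y)

end Main


end Stmt3Aux

open Stmt3Aux in
/-- For `d ∈ 𝒟_α(Ω)`, the continuous extension of `d` to the closure of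
`Ω` makes it a geodesic space. -/
theorem stmt3 {X : Type*} [MetricSpace X] [LocallyCompactSpace X] [CompleteSpace X]
    (Ω : Set X) (hΩ : IsOpen Ω) (α : ℝ) (hα : 1 < α)
    (d : Ω → Ω → ℝ) (hd : MemD α Ω d)
    (e : closure Ω → closure Ω → ℝ) (he : IsContExt Ω d e) :
    IsGeodesicDist e := by
  classical
  obtain ⟨hcont, hext⟩ := he
  obtain ⟨hdist, hlen, hbnd⟩ := hd
  have hα0 : (0:ℝ) < α := lt_trans one_pos hα
  haveI hCS : CompleteSpace (closure Ω) := isClosed_closure.completeSpace_coe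
  have hext' : ∀ q1 q2 : Ω, e (incl q1) (incl q2) = d q1 q2 := fun q1 q2 => hext q1 q2
  haveI hLC : LocallyCompactSpace (closure Ω) := isClosed_closure.locallyCompactSpace
  have hdr : DenseRange (incl (Ω := Ω)) := denseRange_incl
  have hdr2 : Dense (range (Prod.map (incl (Ω := Ω)) (incl (Ω := Ω)))) := hdr.prodMap hdr
  -- symmetry of e
  have hsym : ∀ z w : closure Ω, e z w = e w z := by
    have hC : IsClosed {p : closure Ω × closure Ω | e p.1 p.2 = e p.2 p.1} :=
      isClosed_eq hcont (hcont.comp continuous_swap)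
    have hsub : range (Prod.map (incl (Ω := Ω)) (incl (Ω := Ω)))
        ⊆ {p : closure Ω × closure Ω | e p.1 p.2 = e p.2 p.1} := by
      rintro p ⟨⟨q1, q2⟩, rfl⟩
      show e (incl q1) (incl q2) = e (incl q2) (incl q1)
      calc e (incl q1) (incl q2) = d q1 q2 := hext q1 q2
      _ = d q2 q1 := hdist.1 q1 q2
      _ = e (incl q2) (incl q1) := (hext q2 q1).symm
    intro z w
    exact mem_of_dense_of_closed hdr2 hC hsub (z, w)
  -- triangle inequality for e
  have htri : ∀ a b c : closure Ω, e a c ≤ e a b + e b c := by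
    have hdr3 : Dense (range (Prod.map
        (Prod.map (incl (Ω := Ω)) (incl (Ω := Ω))) (incl (Ω := Ω)))) :=
      (hdr.prodMap hdr).prodMap hdr
    have hC : IsClosed {p : (closure Ω × closure Ω) × closure Ω |
        e p.1.1 p.2 ≤ e p.1.1 p.1.2 + e p.1.2 p.2} := by
      apply isClosed_le
      · exact hcont.comp ((continuous_fst.comp continuous_fst).prodMk continuous_snd)
      · exact (hcont.comp ((continuous_fst.comp continuous_fst).prodMk
          (continuous_snd.comp continuous_fst))).add
          (hcont.comp ((continuous_snd.comp continuous_fst).prodMk continuous_snd))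
    have hsub : range (Prod.map (Prod.map (incl (Ω := Ω)) (incl (Ω := Ω))) (incl (Ω := Ω)))
        ⊆ {p : (closure Ω × closure Ω) × closure Ω |
            e p.1.1 p.2 ≤ e p.1.1 p.1.2 + e p.1.2 p.2} := by
      rintro p ⟨⟨⟨q1, q2⟩, q3⟩, rfl⟩
      show e (incl q1) (incl q3) ≤ e (incl q1) (incl q2) + e (incl q2) (incl q3)
      rw [hext' q1 q3, hext' q1 q2, hext' q2 q3]
      exact hdist.2.1 q1 q2 q3
    intro a b c
    exact mem_of_dense_of_closed hdr3 hC hsub ((a, b), c)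
  -- two-sided comparison with dist
  have hup : ∀ z w : closure Ω, e z w ≤ α * dist z w := by
    have hC : IsClosed {p : closure Ω × closure Ω | e p.1 p.2 ≤ α * dist p.1 p.2} :=
      isClosed_le hcont (continuous_const.mul continuous_dist)
    have hsub : range (Prod.map (incl (Ω := Ω)) (incl (Ω := Ω)))
        ⊆ {p : closure Ω × closure Ω | e p.1 p.2 ≤ α * dist p.1 p.2} := by
      rintro p ⟨⟨q1, q2⟩, rfl⟩
      show e (incl q1) (incl q2) ≤ α * dist (incl q1) (incl q2)
      rw [hext' q1 q2, Subtype.dist_eq]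
      exact (hbnd q1 q2).2
    intro z w
    exact mem_of_dense_of_closed hdr2 hC hsub (z, w)
  have hlo : ∀ z w : closure Ω, α⁻¹ * dist z w ≤ e z w := by
    have hC : IsClosed {p : closure Ω × closure Ω | α⁻¹ * dist p.1 p.2 ≤ e p.1 p.2} :=
      isClosed_le (continuous_const.mul continuous_dist) hcont
    have hsub : range (Prod.map (incl (Ω := Ω)) (incl (Ω := Ω)))
        ⊆ {p : closure Ω × closure Ω | α⁻¹ * dist p.1 p.2 ≤ e p.1 p.2} := by
      rintro p ⟨⟨q1, q2⟩, rfl⟩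
      show α⁻¹ * dist (incl q1) (incl q2) ≤ e (incl q1) (incl q2)
      rw [hext' q1 q2, Subtype.dist_eq]
      exact (hbnd q1 q2).1
    intro z w
    exact mem_of_dense_of_closed hdr2 hC hsub (z, w)
  have hle : ∀ z w : closure Ω, dist z w ≤ α * e z w := by
    intro z w
    have h1 := hlo z w
    have h2 : α * (α⁻¹ * dist z w) ≤ α * e z w := mul_le_mul_of_nonneg_left h1 hα0.le
    rwa [← mul_assoc, mul_inv_cancel₀ (ne_of_gt hα0), one_mul] at h2
  have hnn : ∀ z w : closure Ω, 0 ≤ e z w := fun z w => by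
    have h1 := hlo z w
    have h2 : (0:ℝ) ≤ dist z w := dist_nonneg
    have h3 : (0:ℝ) < α⁻¹ := by positivity
    nlinarith
  have hzz : ∀ z : closure Ω, e z z = 0 := fun z => by
    have h1 := hup z z
    rw [dist_self, mul_zero] at h1
    exact le_antisymm h1 (hnn z z)
  -- approximate intermediate points for e
  have hint : ∀ x y : closure Ω, ∀ θ ε : ℝ, 0 ≤ θ → θ ≤ 1 → 0 < ε →
      ∃ z : closure Ω, e x z ≤ θ * e x y + ε ∧ e z y ≤ (1 - θ) * e x y + ε := by
    intro x y θ ε hθ0 hθ1 hε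
    obtain ⟨ε₁, hε₁def⟩ : ∃ v : ℝ, v = ε / (8 * α + 8) := ⟨_, rfl⟩
    have hε₁pos : 0 < ε₁ := by rw [hε₁def]; positivity
    have hαε₁ : α * ε₁ ≤ ε / 8 := by
      rw [hε₁def, mul_div_assoc']
      rw [div_le_div_iff₀ (by positivity) (by norm_num)]
      nlinarith
    obtain ⟨q1, hq1⟩ := hdr.exists_dist_lt x hε₁pos
    obtain ⟨q2, hq2⟩ := hdr.exists_dist_lt y hε₁pos
    have hex : e x (incl q1) ≤ ε / 8 := by
      have h1 := hup x (incl q1)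
      have h2 : α * dist x (incl q1) ≤ α * ε₁ := mul_le_mul_of_nonneg_left hq1.le hα0.le
      linarith
    have hey : e (incl q2) y ≤ ε / 8 := by
      have h1 := hup (incl q2) y
      have h2 : α * dist (incl q2) y ≤ α * ε₁ := by
        rw [dist_comm]
        exact mul_le_mul_of_nonneg_left hq2.le hα0.le
      linarith
    obtain ⟨z0, hz1, hz2⟩ := exists_intermediate hdist hlen q1 q2 hθ0 hθ1 (half_pos hε)
    have hd12 : d q1 q2 ≤ e x y + ε / 4 := by
      have ha := htri (incl q1) x (incl q2)
      have hb := htri x y (incl q2)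
      have hc1 : e (incl q1) x = e x (incl q1) := hsym _ _
      have hc2 : e y (incl q2) = e (incl q2) y := hsym _ _
      have hc3 := hext' q1 q2
      linarith
    have hxz : e x (incl z0) ≤ θ * e x y + ε := by
      have ha := htri x (incl q1) (incl z0)
      have hb := hext' q1 z0
      have hc : θ * d q1 q2 ≤ θ * (e x y + ε / 4) := mul_le_mul_of_nonneg_left hd12 hθ0
      have hsplit : θ * (e x y + ε / 4) = θ * e x y + θ * (ε / 4) := by ring
      have hθε : θ * (ε / 4) ≤ ε / 4 := by nlinarith
      linarith
    have hzy : e (incl z0) y ≤ (1 - θ) * e x y + ε := by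
      have ha := htri (incl z0) (incl q2) y
      have hb := hext' z0 q2
      have hc : (1 - θ) * d q1 q2 ≤ (1 - θ) * (e x y + ε / 4) :=
        mul_le_mul_of_nonneg_left hd12 (by linarith)
      have hsplit : (1 - θ) * (e x y + ε / 4) = (1 - θ) * e x y + (1 - θ) * (ε / 4) := by ring
      have hθε : (1 - θ) * (ε / 4) ≤ ε / 4 := by nlinarith
      linarith
    exact ⟨incl z0, hxz, hzy⟩
  -- exact midpoints
  have hmid_ex : ∀ a b : closure Ω, ∃ m, e a m = e a b / 2 ∧ e m b = e a b / 2 :=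
    exists_midpoint' hα0 hcont hle hup hsym htri hint
  -- the geodesic
  intro x y
  obtain ⟨γ, hγ0, hγ1, hγe⟩ := exists_unit_speed hα0 hcont hle hnn hzz htri hmid_ex x y
  have hlin : ∀ t s : ℝ, 0 ≤ t → t ≤ s → s ≤ 1 →
      pathLengthOn e γ t s = ENNReal.ofReal (e x y * (s - t)) := by
    intro t s ht hts hs
    refine pathLengthOn_of_linear e γ hts (hnn x y) (fun u v hu huv hv => ?_)
    rw [hsym (γ v) (γ u), hγe u v (le_trans ht hu) huv (le_trans hv hs)]
    ring
  have hplen : pathLength e γ = ENNReal.ofReal (e x y) := by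
    calc pathLength e γ = pathLengthOn e γ 0 1 := rfl
    _ = ENNReal.ofReal (e x y * (1 - 0)) := hlin 0 1 le_rfl zero_le_one le_rfl
    _ = ENNReal.ofReal (e x y) := by norm_num
  refine ⟨γ, hγ0, hγ1, fun t s ht hts hs => ?_, fun t s ht hts hs => ?_⟩
  · rw [hlin t s ht hts hs, hplen, ← ENNReal.ofReal_mul (hnn x y)]
  · rw [hlin t s ht hts hs, hγe t s ht hts hs]
    congr 1
    ring
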